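/- arXiv:math/0605460 — 3 statements merged into one kernel-verified Lean document; each statement's English description precedes it below -/
import Mathlib

section
/- Let (W, {s_i}_{i∈I}) be a Coxeter system with length function ℓ, and let S ⊆ I. Suppose w_S, w'_S ∈ W_S and w, w' ∈ W^S are such that there exists a reflection t ∈ T with w_S w = t (w'_S w') and ℓ(w_S w) = ℓ(w'_S w') + 1. Then ℓ(w) ≥ ℓ(w'). -/
namespace CoxeterAux

open List

open scoped Classical

variable {B W : Type*} [Group W] {M : CoxeterMatrix B} (cs : CoxeterSystem M W)

local prefix:100 "s" => cs.simple
local prefix:100 "π" => cs.wordProd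
local prefix:100 "ℓ" => cs.length

/-- The underlying function of the permutation attached to a simple reflection in the
standard "strong exchange" representation on `W × ℤˣ`. -/
noncomputable def sigmaFun (i : B) : W × ℤˣ → W × ℤˣ :=
  fun p => (s i * p.1 * s i, if p.1 = s i then -p.2 else p.2)

theorem conj_simple_eq_simple_iff (i : B) (t : W) : s i * t * s i = s i ↔ t = s i := by
  constructor
  · intro h
    have e : t = s i * (s i * t * s i) * s i := by
      calc t = (s i * s i) * t * (s i * s i) := by
              rw [cs.simple_mul_simple_self]; group
      _ = s i * (s i * t * s i) * s i := by group
    rw [h, cs.simple_mul_simple_cancel_right] at e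
    exact e
  · rintro rfl
    rw [cs.simple_mul_simple_self, one_mul]

theorem sigmaFun_involutive (i : B) : Function.Involutive (sigmaFun cs i) := by
  rintro ⟨t, z⟩
  have e : s i * (s i * t * s i) * s i = t := by
    calc s i * (s i * t * s i) * s i = (s i * s i) * t * (s i * s i) := by group
    _ = t := by rw [cs.simple_mul_simple_self]; group
  by_cases h : t = s i
  · simp [sigmaFun, h, e, cs.simple_mul_simple_self]
  · have h2 : ¬(s i * t = 1) := fun hc =>
      h (by rw [← cs.inv_simple]; exact eq_inv_of_mul_eq_one_right hc)
    simp [sigmaFun, h, e, conj_simple_eq_simple_iff, h2]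

/-- The permutation of `W × ℤˣ` attached to a simple reflection. -/
noncomputable def sigmaPerm (i : B) : Equiv.Perm (W × ℤˣ) :=
  (sigmaFun_involutive cs i).toPerm _

theorem sigmaPerm_apply (i : B) (p : W × ℤˣ) :
    sigmaPerm cs i p = (s i * p.1 * s i, (if p.1 = s i then (-1 : ℤˣ) else 1) * p.2) := by
  show sigmaFun cs i p = _
  rcases p with ⟨t, z⟩
  by_cases h : t = s i <;> simp [sigmaFun, h]

@[simp] theorem sigmaPerm_inv (i : B) : (sigmaPerm cs i)⁻¹ = sigmaPerm cs i := by
  rw [Equiv.Perm.inv_def]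
  exact Function.Involutive.toPerm_symm _

/-- Conjugating twice by a simple reflection is the identity. -/
theorem sandwich (a : B) (x : W) : s a * (s a * x * s a) * s a = x := by
  have h : s a * (s a * x * s a) * s a = (s a * s a) * x * (s a * s a) := by group
  rw [h, cs.simple_mul_simple_self, one_mul, mul_one]

theorem conj_eq_iff (a : B) (x y : W) : s a * x * s a = y ↔ x = s a * y * s a := by
  constructor
  · rintro rfl
    exact (sandwich cs a x).symm
  · rintro rfl
    exact sandwich cs a y

/-- The alternating sequence of "dihedral" reflections `s j, s j s i s j, ...`. -/
def gSeq (i j : B) (n : ℕ) : W := s j * (s i * s j) ^ n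

theorem gSeq_add_two (i j : B) (n : ℕ) :
    gSeq cs i j (n + 2) = (s j * s i) * gSeq cs i j n * (s i * s j) := by
  unfold gSeq
  rw [show n + 2 = (n + 1) + 1 from rfl, pow_succ (s i * s j) (n + 1), pow_succ']
  simp [mul_assoc]

theorem conj_eq_gSeq_iff (i j : B) (n : ℕ) (t : W) :
    s i * (s j * t * s j) * s i = gSeq cs i j n ↔ t = gSeq cs i j (n + 2) := by
  rw [conj_eq_iff, conj_eq_iff, gSeq_add_two]
  simp [mul_assoc]

theorem key1 (i j : B) (k : ℕ) (t : W) (z : ℤˣ) :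
    ((sigmaPerm cs i * sigmaPerm cs j) ^ k) (t, z) =
      ((s i * s j) ^ k * t * (s j * s i) ^ k,
        (∏ n ∈ Finset.range (2 * k), if t = gSeq cs i j n then (-1 : ℤˣ) else 1) * z) := by
  induction k generalizing t z with
  | zero => simp
  | succ k ih =>
    rw [pow_succ, Equiv.Perm.mul_apply, Equiv.Perm.mul_apply, sigmaPerm_apply, sigmaPerm_apply]
    dsimp only
    rw [ih]
    refine Prod.ext ?_ ?_
    · show (s i * s j) ^ k * (s i * (s j * t * s j) * s i) * (s j * s i) ^ k =
        (s i * s j) ^ (k + 1) * t * (s j * s i) ^ (k + 1)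
      rw [pow_succ (s i * s j) k, pow_succ' (s j * s i) k]
      simp [mul_assoc]
    · show (∏ n ∈ Finset.range (2 * k),
          if s i * (s j * t * s j) * s i = gSeq cs i j n then (-1 : ℤˣ) else 1) *
          ((if s j * t * s j = s i then (-1 : ℤˣ) else 1) *
            ((if t = s j then (-1 : ℤˣ) else 1) * z)) =
        (∏ n ∈ Finset.range (2 * (k + 1)), if t = gSeq cs i j n then (-1 : ℤˣ) else 1) * z
      have h0 : (s j * t * s j = s i) ↔ (t = gSeq cs i j 1) := by
        rw [conj_eq_iff]
        simp [gSeq, mul_assoc]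
      have h1 : (t = s j) ↔ (t = gSeq cs i j 0) := by
        simp [gSeq]
      have h2 : ∀ n, (s i * (s j * t * s j) * s i = gSeq cs i j n) ↔ (t = gSeq cs i j (n + 2)) :=
        fun n => conj_eq_gSeq_iff cs i j n t
      simp only [h0, h1, h2]
      rw [show 2 * (k + 1) = 2 + 2 * k by ring, Finset.prod_range_add]
      rw [show (∏ n ∈ Finset.range 2, if t = gSeq cs i j n then (-1 : ℤˣ) else 1) =
          (if t = gSeq cs i j 0 then (-1 : ℤˣ) else 1) *
            (if t = gSeq cs i j 1 then (-1 : ℤˣ) else 1) by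
        rw [Finset.prod_range_succ, Finset.prod_range_one]]
      simp only [show ∀ n : ℕ, 2 + n = n + 2 from fun n => by ring]
      split_ifs <;> simp [mul_assoc, mul_comm, mul_left_comm]

theorem sigma_liftable : M.IsLiftable (sigmaPerm cs) := by
  intro i j
  refine Equiv.ext fun p => ?_
  rcases p with ⟨t, z⟩
  rw [key1]
  have hm : (s i * s j) ^ M i j = 1 := cs.simple_mul_simple_pow i j
  have hm' : (s j * s i) ^ M i j = 1 := cs.simple_mul_simple_pow' i j
  have hprod : (∏ n ∈ Finset.range (2 * M i j),
      if t = gSeq cs i j n then (-1 : ℤˣ) else 1) = 1 := by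
    rw [show 2 * M i j = M i j + M i j by ring, Finset.prod_range_add]
    have hper : ∀ n, gSeq cs i j (M i j + n) = gSeq cs i j n := by
      intro n
      unfold gSeq
      rw [pow_add, hm, one_mul]
    simp only [hper]
    exact Int.units_mul_self _
  rw [hm, hm', hprod, one_mul, mul_one, one_mul]
  rfl

/-- The strong exchange representation `W →* Perm (W × ℤˣ)`. -/
noncomputable def rho : W →* Equiv.Perm (W × ℤˣ) :=
  cs.lift ⟨sigmaPerm cs, sigma_liftable cs⟩

theorem rho_simple (i : B) : rho cs (s i) = sigmaPerm cs i :=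
  cs.lift_apply_simple (sigma_liftable cs) i

/-- Sign of `t` with respect to a list of reflections. -/
noncomputable def listSign (t : W) (l : List W) : ℤˣ :=
  (l.map fun x => if t = x then (-1 : ℤˣ) else 1).prod

@[simp] theorem listSign_nil (t : W) : listSign t ([] : List W) = 1 := rfl

theorem listSign_cons (t : W) (x : W) (l : List W) :
    listSign t (x :: l) = (if t = x then (-1 : ℤˣ) else 1) * listSign t l := by
  simp [listSign]

theorem listSign_eq_one_of_not_mem (t : W) (l : List W) (h : t ∉ l) : listSign t l = 1 := by
  induction l with
  | nil => rfl
  | cons x l ih =>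
    rw [listSign_cons, if_neg (fun e => h (by rw [e]; exact List.mem_cons_self)),
      ih (fun e => h (List.mem_cons_of_mem _ e)), one_mul]

theorem rho_inv_wordProd_apply (ω : List B) (t : W) (z : ℤˣ) :
    (rho cs (π ω))⁻¹ (t, z) =
      ((π ω)⁻¹ * t * (π ω), listSign t (cs.leftInvSeq ω) * z) := by
  induction ω generalizing t z with
  | nil => simp [cs.wordProd_nil]
  | cons i ω ih =>
    have hl : cs.leftInvSeq (i :: ω) =
        s i :: List.map (MulAut.conj (s i)) (cs.leftInvSeq ω) := rfl
    rw [cs.wordProd_cons, map_mul, mul_inv_rev, Equiv.Perm.mul_apply, rho_simple,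
      sigmaPerm_inv, sigmaPerm_apply]
    dsimp only
    rw [ih]
    refine Prod.ext ?_ ?_
    · show (π ω)⁻¹ * (s i * t * s i) * π ω = (s i * π ω)⁻¹ * t * (s i * π ω)
      rw [mul_inv_rev, cs.inv_simple]
      simp [mul_assoc]
    · show listSign (s i * t * s i) (cs.leftInvSeq ω) *
          ((if t = s i then (-1 : ℤˣ) else 1) * z) =
        listSign t (cs.leftInvSeq (i :: ω)) * z
      rw [hl, listSign_cons]
      have : listSign t (List.map (MulAut.conj (s i)) (cs.leftInvSeq ω)) =
          listSign (s i * t * s i) (cs.leftInvSeq ω) := by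
        unfold listSign
        rw [List.map_map]
        congr 1
        apply List.map_congr_left
        intro x _
        simp only [Function.comp_apply, MulAut.conj_apply, cs.inv_simple]
        by_cases h : s i * t * s i = x
        · rw [if_pos h, if_pos]
          rw [← h]
          exact ((sandwich cs i t).symm : t = _)
        · rw [if_neg h, if_neg]
          intro e
          exact h (by rw [e, sandwich])
      rw [this]
      generalize listSign (s i * t * s i) (cs.leftInvSeq ω) = A
      generalize (if t = s i then (-1:ℤˣ) else 1) = C
      rw [← mul_assoc, mul_comm A C]

/-- The sign of `t` at `w`. -/
noncomputable def epsilon (u t : W) : ℤˣ := ((rho cs u)⁻¹ (t, 1)).2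

theorem epsilon_eq_listSign (ω : List B) (t : W) :
    epsilon cs (π ω) t = listSign t (cs.leftInvSeq ω) := by
  unfold epsilon
  rw [rho_inv_wordProd_apply, mul_one]

theorem rho_inv_apply (u t : W) (z : ℤˣ) :
    (rho cs u)⁻¹ (t, z) = (u⁻¹ * t * u, epsilon cs u t * z) := by
  obtain ⟨ω, -, rfl⟩ := cs.exists_reduced_word u
  rw [rho_inv_wordProd_apply, epsilon_eq_listSign]

theorem rho_apply (u t : W) (z : ℤˣ) :
    rho cs u (u⁻¹ * t * u, z) = (t, epsilon cs u t * z) := by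
  rw [show ((u⁻¹ * t * u, z) : W × ℤˣ) = (rho cs u)⁻¹ (t, epsilon cs u t * z) by
    rw [rho_inv_apply, ← mul_assoc, Int.units_mul_self, one_mul]]
  exact Equiv.apply_symm_apply (rho cs u) _

theorem epsilon_one (t : W) : epsilon cs 1 t = 1 := by
  unfold epsilon
  rw [map_one]
  rfl

theorem epsilon_mul (x y t : W) :
    epsilon cs (x * y) t = epsilon cs y (x⁻¹ * t * x) * epsilon cs x t := by
  unfold epsilon
  rw [map_mul, mul_inv_rev, Equiv.Perm.mul_apply]
  rw [show ((rho cs x)⁻¹ (t, 1)) = (x⁻¹ * t * x, epsilon cs x t * 1) from rho_inv_apply cs x t 1,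
    rho_inv_apply]
  simp only [mul_assoc, mul_one]
  rfl

theorem epsilon_simple_mul (i : B) (u t : W) :
    epsilon cs (s i * u) t = epsilon cs u (s i * t * s i) * (if t = s i then (-1 : ℤˣ) else 1) := by
  unfold epsilon
  rw [map_mul, mul_inv_rev, Equiv.Perm.mul_apply, rho_simple, sigmaPerm_inv, sigmaPerm_apply]
  dsimp only
  rw [rho_inv_apply]
  rcases eq_or_ne t (s i) with h | h <;> simp [h] <;> rfl

theorem length_lt_of_epsilon_neg :
    ∀ n (w t : W), ℓ w = n → epsilon cs w t = -1 → ℓ (t * w) < ℓ w := by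
  intro n
  induction n using Nat.strong_induction_on with
  | _ n ih =>
    intro w t hn he
    rcases Nat.eq_zero_or_pos n with h0 | hpos
    · subst hn
      rw [cs.length_eq_zero_iff.mp h0] at he
      rw [epsilon_one] at he
      exact absurd he (by decide)
    · have hw1 : w ≠ 1 := by
        intro h
        rw [h, cs.length_one] at hn
        omega
      obtain ⟨i, hi⟩ := cs.exists_leftDescent_of_ne_one hw1
      set u := s i * w with hu
      have hwu : w = s i * u := by
        rw [hu, ← mul_assoc, cs.simple_mul_simple_self, one_mul]
      have hlu : ℓ u = n - 1 := by
        rcases cs.length_simple_mul w i with h | h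
        · exact absurd h (by unfold CoxeterSystem.IsLeftDescent at hi; omega)
        · rw [hu]; omega
      rcases eq_or_ne t (s i) with rfl | hne
      · rw [← hu]
        have : ℓ u < n := by unfold CoxeterSystem.IsLeftDescent at hi; omega
        omega
      · have he' : epsilon cs u (s i * t * s i) = -1 := by
          rw [hwu, epsilon_simple_mul, if_neg hne, mul_one] at he
          exact he
        have hlt : ℓ (s i * t * s i * u) < ℓ u :=
          ih (n - 1) (by unfold CoxeterSystem.IsLeftDescent at hi; omega) u _ hlu he'
        have : t * w = s i * (s i * t * s i * u) := by
          rw [hwu]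
          have : s i * (s i * t * s i * u) = (s i * s i) * t * (s i * u) := by group
          rw [this, cs.simple_mul_simple_self, one_mul]
        rw [this, hn]
        calc ℓ (s i * (s i * t * s i * u)) ≤ ℓ (s i * t * s i * u) + 1 := by
              rcases cs.length_simple_mul (s i * t * s i * u) i with h | h <;> omega
        _ < ℓ u + 1 := by omega
        _ ≤ n := by omega

theorem epsilon_self_of_isReflection {t : W} (ht : cs.IsReflection t) :
    epsilon cs t t = -1 := by
  obtain ⟨v, i, rfl⟩ := ht
  set t := v * s i * v⁻¹ with htdef
  have h1 : (rho cs v)⁻¹ (t, 1) = (s i, epsilon cs v t) := by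
    rw [rho_inv_apply, mul_one]
    congr 1
    rw [htdef]
    group
  have key : (rho cs t)⁻¹ (t, 1) = (t, -1) := by
    have : (rho cs t)⁻¹ = rho cs v * (sigmaPerm cs i) * (rho cs v)⁻¹ := by
      rw [htdef, map_mul, map_mul, map_inv, mul_inv_rev, mul_inv_rev, inv_inv, rho_simple,
        sigmaPerm_inv]
      rw [mul_assoc]
    rw [this, Equiv.Perm.mul_apply, Equiv.Perm.mul_apply, h1, sigmaPerm_apply]
    dsimp only
    rw [if_pos rfl, cs.simple_mul_simple_self, one_mul]
    have : rho cs v (s i, -1 * epsilon cs v t) = rho cs v (v⁻¹ * t * v, -1 * epsilon cs v t) := by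
      congr 1
      rw [htdef]
      group
    rw [this, rho_apply]
    rw [show epsilon cs v t * (-1 * epsilon cs v t) = -(epsilon cs v t * epsilon cs v t) by
      generalize epsilon cs v t = e; rw [mul_comm (-1 : ℤˣ) e, ← mul_assoc]; simp,
      Int.units_mul_self]
  unfold epsilon
  rw [key]

theorem epsilon_neg_of_isLeftInversion {w t : W} (ht : cs.IsReflection t)
    (hlt : ℓ (t * w) < ℓ w) : epsilon cs w t = -1 := by
  rcases Int.units_eq_one_or (epsilon cs w t) with he | he
  · exfalso
    set v := t * w with hv
    have hw : w = t * v := by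
      rw [hv, ← mul_assoc, ht.mul_self, one_mul]
    have : epsilon cs w t = epsilon cs v (t⁻¹ * t * t) * epsilon cs t t := by
      rw [hw]; exact epsilon_mul cs t v t
    rw [ht.inv, ht.mul_self, one_mul, epsilon_self_of_isReflection cs ht, he] at this
    have hv' : epsilon cs v t = -1 := by
      rcases Int.units_eq_one_or (epsilon cs v t) with h | h
      · rw [h, one_mul] at this; exact absurd this.symm (by decide)
      · exact h
    have := length_lt_of_epsilon_neg cs (ℓ v) v t rfl hv'
    rw [← hw] at this
    omega
  · exact he

/-- Strong exchange property, arbitrary word version. -/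
theorem strong_exchange (ω : List B) {t : W} (ht : cs.IsReflection t)
    (hlt : ℓ (t * π ω) < ℓ (π ω)) :
    ∃ j < ω.length, t * π ω = π (ω.eraseIdx j) := by
  have he : epsilon cs (π ω) t = -1 := epsilon_neg_of_isLeftInversion cs ht hlt
  rw [epsilon_eq_listSign] at he
  have hmem : t ∈ cs.leftInvSeq ω := by
    by_contra hmem
    rw [listSign_eq_one_of_not_mem _ _ hmem] at he
    exact absurd he.symm (by decide)
  obtain ⟨j, hj, hjt⟩ := List.getElem_of_mem hmem
  rw [cs.length_leftInvSeq] at hj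
  refine ⟨j, hj, ?_⟩
  have := cs.getD_leftInvSeq_mul_wordProd ω j
  rw [List.getD_eq_getElem (cs.leftInvSeq ω) 1 (by rw [cs.length_leftInvSeq]; exact hj), hjt]
    at this
  exact this

theorem eraseIdx_append_left' {α : Type*} (l1 l2 : List α) (j : ℕ) (h : j < l1.length) :
    (l1 ++ l2).eraseIdx j = l1.eraseIdx j ++ l2 := by
  induction l1 generalizing j with
  | nil => simp at h
  | cons a l1 ih =>
    cases j with
    | zero => rfl
    | succ j =>
      simp only [List.cons_append, List.eraseIdx_cons_succ]
      rw [ih j (by simpa using h)]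

theorem eraseIdx_append_right' {α : Type*} (l1 l2 : List α) (j : ℕ) (h : l1.length ≤ j) :
    (l1 ++ l2).eraseIdx j = l1 ++ l2.eraseIdx (j - l1.length) := by
  induction l1 generalizing j with
  | nil => simp
  | cons a l1 ih =>
    cases j with
    | zero => simp at h
    | succ j =>
      simp only [List.cons_append, List.eraseIdx_cons_succ]
      rw [ih j (by simpa using h)]
      simp [Nat.succ_sub_succ]

variable (S : Set B)

theorem wordProd_mem_closure (ω : List B) (hS : ∀ i ∈ ω, i ∈ S) :
    π ω ∈ Subgroup.closure (cs.simple '' S) := by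
  induction ω with
  | nil => rw [cs.wordProd_nil]; exact one_mem _
  | cons a ω ih =>
    rw [cs.wordProd_cons]
    exact mul_mem (Subgroup.subset_closure ⟨a, hS a List.mem_cons_self, rfl⟩)
      (ih fun i hi => hS i (List.mem_cons_of_mem _ hi))

theorem exists_word_of_mem_closure {v : W} (hv : v ∈ Subgroup.closure (cs.simple '' S)) :
    ∃ ω : List B, (∀ i ∈ ω, i ∈ S) ∧ π ω = v := by
  refine Subgroup.closure_induction ?_ ?_ ?_ ?_ hv
  · rintro x ⟨i, hiS, rfl⟩
    exact ⟨[i], by simpa using hiS, by simp [cs.wordProd_cons, cs.wordProd_nil]⟩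
  · exact ⟨[], by simp, cs.wordProd_nil⟩
  · rintro x y - - ⟨ω, hω, rfl⟩ ⟨γ, hγ, rfl⟩
    exact ⟨ω ++ γ, fun i hi => ((List.mem_append.mp hi).elim (hω i) (hγ i)),
      cs.wordProd_append ω γ⟩
  · rintro x - ⟨ω, hω, rfl⟩
    exact ⟨ω.reverse, fun i hi => hω i (List.mem_reverse.mp hi), cs.wordProd_reverse ω⟩

theorem exists_shorter_word (ω : List B) (hS : ∀ i ∈ ω, i ∈ S)
    (hnr : ¬cs.IsReduced ω) :
    ∃ γ : List B, (∀ i ∈ γ, i ∈ S) ∧ π γ = π ω ∧ γ.length < ω.length := by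
  have hex : ∃ n, ¬cs.IsReduced (ω.take n) := ⟨ω.length, by rwa [List.take_length]⟩
  have hk1 : ¬cs.IsReduced (ω.take (Nat.find hex)) := Nat.find_spec hex
  have hmin : ∀ m, m < Nat.find hex → cs.IsReduced (ω.take m) :=
    fun m hm => not_not.mp (Nat.find_min hex hm)
  have hk1pos : Nat.find hex ≠ 0 := by
    intro h
    apply hk1
    rw [h, List.take_zero]
    show ℓ (π ([] : List B)) = _
    simp [cs.wordProd_nil]
  obtain ⟨k, hk⟩ : ∃ k, Nat.find hex = k + 1 := ⟨Nat.find hex - 1, by omega⟩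
  have hk1le : Nat.find hex ≤ ω.length := Nat.find_le (by rwa [List.take_length])
  have hklt : k < ω.length := by omega
  have htake : ω.take (k + 1) = ω.take k ++ [ω[k]] := by
    rw [List.take_succ, List.getElem?_eq_getElem hklt]
    rfl
  have hxred : cs.IsReduced (ω.take k) := hmin k (by omega)
  have hxlen : ℓ (π (ω.take k)) = k := by
    rw [hxred, List.length_take]
    omega
  have hy : π (ω.take (k + 1)) = π (ω.take k) * s (ω[k]) := by
    rw [htake, cs.wordProd_append]
    simp [cs.wordProd_cons, cs.wordProd_nil]
  have hylen : ℓ (π (ω.take k) * s (ω[k])) < k := by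
    have h1 : ℓ (π (ω.take (k + 1))) ≠ (ω.take (k + 1)).length := by
      rw [hk] at hk1; exact hk1
    have hlen1 : (ω.take (k + 1)).length = k + 1 := by rw [List.length_take]; omega
    have h3 : ℓ (π (ω.take k) * s (ω[k])) ≠ ℓ (π (ω.take k)) :=
      cs.length_mul_simple_ne _ _
    rcases cs.length_mul_simple (π (ω.take k)) (ω[k]) with h | h
    · rw [hy, hlen1] at h1
      omega
    · omega
  have ht : cs.IsReflection (π (ω.take k) * s (ω[k]) * (π (ω.take k))⁻¹) :=
    ⟨π (ω.take k), ω[k], rfl⟩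
  have htx : (π (ω.take k) * s (ω[k]) * (π (ω.take k))⁻¹) * π (ω.take k) =
      π (ω.take k) * s (ω[k]) := by group
  obtain ⟨j, hj, hje⟩ := strong_exchange cs (ω.take k) ht (by rw [htx, hxlen]; exact hylen)
  rw [htx] at hje
  refine ⟨(ω.take k).eraseIdx j ++ ω.drop (k + 1), ?_, ?_, ?_⟩
  · intro i hi
    rcases List.mem_append.mp hi with h | h
    · exact hS i (List.take_subset k ω (List.eraseIdx_subset h))
    · exact hS i (List.drop_subset _ ω h)
  · rw [cs.wordProd_append, ← hje, ← hy]
    conv_rhs => rw [← List.take_append_drop (k + 1) ω]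
    rw [cs.wordProd_append]
  · have e1 : ((ω.take k).eraseIdx j).length + 1 = (ω.take k).length :=
      List.length_eraseIdx_add_one hj
    rw [List.length_append, List.length_drop]
    rw [List.length_take] at e1
    omega

theorem exists_reduced_word_subset (ω : List B) (hS : ∀ i ∈ ω, i ∈ S) :
    ∃ γ : List B, (∀ i ∈ γ, i ∈ S) ∧ cs.IsReduced γ ∧ π γ = π ω := by
  suffices H : ∀ n (ω : List B), ω.length ≤ n → (∀ i ∈ ω, i ∈ S) →
      ∃ γ : List B, (∀ i ∈ γ, i ∈ S) ∧ cs.IsReduced γ ∧ π γ = π ω from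
    H ω.length ω le_rfl hS
  intro n
  induction n with
  | zero =>
    intro ω hlen hS
    rw [List.length_eq_zero_iff.mp (show ω.length = 0 by omega)]
    exact ⟨[], by simp, by show ℓ (π ([] : List B)) = _; simp [cs.wordProd_nil], rfl⟩
  | succ n ih =>
    intro ω hlen hS
    by_cases hred : cs.IsReduced ω
    · exact ⟨ω, hS, hred, rfl⟩
    · obtain ⟨γ, hγS, hγπ, hγlen⟩ := exists_shorter_word cs S ω hS hred
      obtain ⟨δ, h1, h2, h3⟩ := ih γ (by omega) hγS
      exact ⟨δ, h1, h2, h3.trans hγπ⟩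

theorem length_closure_mul {w : W}
    (hw : ∀ v ∈ Subgroup.closure (cs.simple '' S), ℓ (v * w) ≥ ℓ w) :
    ∀ v ∈ Subgroup.closure (cs.simple '' S), ℓ (v * w) = ℓ v + ℓ w := by
  suffices H : ∀ n, ∀ v ∈ Subgroup.closure (cs.simple '' S), ℓ v ≤ n →
      ℓ (v * w) = ℓ v + ℓ w from fun v hv => H (ℓ v) v hv le_rfl
  intro n
  induction n with
  | zero =>
    intro v _ hlen
    rw [cs.length_eq_zero_iff.mp (show ℓ v = 0 by omega)]
    simp
  | succ n ih =>
    intro v hv hlen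
    rcases Nat.eq_zero_or_pos (ℓ v) with h0 | hpos
    · rw [cs.length_eq_zero_iff.mp h0]
      simp
    · obtain ⟨ω, hωS, hωπ⟩ := exists_word_of_mem_closure cs S hv
      obtain ⟨α, hαS, hαred, hαπ⟩ := exists_reduced_word_subset cs S ω hωS
      rw [hωπ] at hαπ
      have hαlen : α.length = ℓ v := by rw [← hαred, hαπ]
      cases α with
      | nil => simp at hαlen; omega
      | cons a α' =>
        have haS : a ∈ S := hαS a List.mem_cons_self
        have hα'S : ∀ i ∈ α', i ∈ S := fun i hi => hαS i (List.mem_cons_of_mem _ hi)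
        have hv' : π α' ∈ Subgroup.closure (cs.simple '' S) :=
          wordProd_mem_closure cs S α' hα'S
        have hα'red : cs.IsReduced α' := by
          have := CoxeterSystem.IsReduced.drop (ω := a :: α') hαred 1
          simpa using this
        have hlv' : ℓ (π α') = ℓ v - 1 := by
          rw [hα'red]
          simp only [List.length_cons] at hαlen
          omega
        have hIH : ℓ (π α' * w) = ℓ (π α') + ℓ w := ih (π α') hv' (by omega)
        have hvsplit : v = s a * π α' := by rw [← hαπ, cs.wordProd_cons]
        rcases cs.length_simple_mul (π α' * w) a with hup | hdown
        · have h5 : ℓ (v * w) = ℓ (π α' * w) + 1 := by rw [hvsplit, mul_assoc]; exact hup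
          omega
        · exfalso
          have hne := cs.length_simple_mul_ne (π α' * w) a
          have hlt : ℓ (s a * (π α' * w)) < ℓ (π α' * w) := by omega
          obtain ⟨β, hβlen, hβπ⟩ := cs.exists_reduced_word w
          have hcat : π (α' ++ β) = π α' * w := by rw [cs.wordProd_append, ← hβπ]
          have hcatred : cs.IsReduced (α' ++ β) := by
            show ℓ (π (α' ++ β)) = _
            rw [hcat, hIH, List.length_append, hα'red, hβπ, hβlen]
          rw [← hcat] at hlt
          obtain ⟨j, hj, hje⟩ := strong_exchange cs (α' ++ β) (cs.isReflection_simple a) hlt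
          rw [List.length_append] at hj
          by_cases hjlt : j < α'.length
          · rw [eraseIdx_append_left' _ _ _ hjlt] at hje
            rw [hcat] at hje
            rw [cs.wordProd_append] at hje
            rw [← hβπ] at hje
            have hje' : (s a * π α') * w = π (α'.eraseIdx j) * w := by
              rw [mul_assoc]; exact hje
            have hv2 : v = π (α'.eraseIdx j) := by
              rw [hvsplit]; exact mul_right_cancel hje'
            have hb1 : ℓ v ≤ (α'.eraseIdx j).length := hv2 ▸ cs.length_wordProd_le _
            have hb2 : (α'.eraseIdx j).length + 1 = α'.length :=
              List.length_eraseIdx_add_one hjlt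
            rw [hα'red] at hlv'
            omega
          · push_neg at hjlt
            rw [eraseIdx_append_right' _ _ _ hjlt] at hje
            rw [hcat] at hje
            rw [cs.wordProd_append] at hje
            have hc : π (β.eraseIdx (j - α'.length)) = ((π α')⁻¹ * s a * π α') * w := by
              apply mul_left_cancel (a := π α')
              rw [← hje]
              group
            have hmem : (π α')⁻¹ * s a * π α' ∈ Subgroup.closure (cs.simple '' S) :=
              mul_mem (mul_mem (inv_mem hv') (Subgroup.subset_closure ⟨a, haS, rfl⟩)) hv'
            have hge : ℓ (((π α')⁻¹ * s a * π α') * w) ≥ ℓ w := hw _ hmem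
            have hle : ℓ (π (β.eraseIdx (j - α'.length))) ≤ (β.eraseIdx (j - α'.length)).length :=
              cs.length_wordProd_le _
            have hb2 : (β.eraseIdx (j - α'.length)).length + 1 = β.length :=
              List.length_eraseIdx_add_one (by omega)
            rw [hc] at hle
            have hβlen' : ℓ w = β.length := by rw [hβπ]; exact hβlen
            omega

end CoxeterAux

/-- Lemma 2.2(i) of Heckenberger–Kolb: if `w_S w → w'_S w'` with `w_S, w'_S` in the
standard parabolic subgroup `W_S` and `w, w'` minimal length coset representatives,
then `ℓ(w) ≥ ℓ(w')`. -/
theorem length_ge_of_arrow_parabolic_decomposition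
    {B W : Type*} [Group W] {M : CoxeterMatrix B} (cs : CoxeterSystem M W)
    (S : Set B)
    (wS wS' : W)
    (hwS : wS ∈ Subgroup.closure (cs.simple '' S))
    (hwS' : wS' ∈ Subgroup.closure (cs.simple '' S))
    (w w' : W)
    (hw : ∀ v ∈ Subgroup.closure (cs.simple '' S),
      cs.length (v * w) ≥ cs.length w)
    (hw' : ∀ v ∈ Subgroup.closure (cs.simple '' S),
      cs.length (v * w') ≥ cs.length w')
    (t : W) (ht : cs.IsReflection t)
    (heq : wS * w = t * (wS' * w'))
    (hlen : cs.length (wS * w) = cs.length (wS' * w') + 1) :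
    cs.length w ≥ cs.length w' := by
  classical
  obtain ⟨ωS, hωS, hωπ⟩ := CoxeterAux.exists_word_of_mem_closure cs S hwS
  obtain ⟨α, hαS, hαred, hαπ⟩ := CoxeterAux.exists_reduced_word_subset cs S ωS hωS
  rw [hωπ] at hαπ
  obtain ⟨β, hβlen, hβπ⟩ := cs.exists_reduced_word w
  have hadd : cs.length (wS * w) = cs.length wS + cs.length w :=
    CoxeterAux.length_closure_mul cs S hw wS hwS
  have hcat : cs.wordProd (α ++ β) = wS * w := by rw [cs.wordProd_append, hαπ, ← hβπ]
  have hαlen : α.length = cs.length wS := by rw [← hαred, hαπ]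
  have hcatred : cs.IsReduced (α ++ β) := by
    show cs.length _ = _
    rw [hcat, hadd, List.length_append, hαlen, hβπ, hβlen]
  have htmul : t * (wS * w) = wS' * w' := by
    rw [heq, ← mul_assoc, ht.mul_self, one_mul]
  have hlt : cs.length (t * cs.wordProd (α ++ β)) < cs.length (cs.wordProd (α ++ β)) := by
    rw [hcat, htmul]
    omega
  obtain ⟨j, hj, hje⟩ := CoxeterAux.strong_exchange cs (α ++ β) ht hlt
  rw [List.length_append] at hj
  rw [hcat, htmul] at hje
  by_cases hjlt : j < α.length
  · rw [CoxeterAux.eraseIdx_append_left' _ _ _ hjlt, cs.wordProd_append, ← hβπ] at hje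
    set u := cs.wordProd (α.eraseIdx j) with hu
    have humem : u ∈ Subgroup.closure (cs.simple '' S) :=
      CoxeterAux.wordProd_mem_closure cs S _ (fun i hi => hαS i (List.eraseIdx_subset hi))
    have hw2 : w = (u⁻¹ * wS') * w' := by
      rw [mul_assoc, hje]
      group
    have hfin := hw' (u⁻¹ * wS') (mul_mem (inv_mem humem) hwS')
    rw [← hw2] at hfin
    exact hfin
  · push_neg at hjlt
    rw [CoxeterAux.eraseIdx_append_right' _ _ _ hjlt, cs.wordProd_append, hαπ] at hje
    have hc : cs.wordProd (β.eraseIdx (j - α.length)) = (wS⁻¹ * wS') * w' := by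
      apply mul_left_cancel (a := wS)
      rw [← hje]
      group
    have hge := hw' (wS⁻¹ * wS') (mul_mem (inv_mem hwS) hwS')
    have hle : cs.length (cs.wordProd (β.eraseIdx (j - α.length))) ≤
        (β.eraseIdx (j - α.length)).length := cs.length_wordProd_le _
    have hb2 : (β.eraseIdx (j - α.length)).length + 1 = β.length :=
      List.length_eraseIdx_add_one (by omega)
    rw [hc] at hle
    have hβlen' : cs.length w = β.length := by rw [hβπ]; exact hβlen
    omega
end

section
/- Let (W, {s_i}_{i∈I}) be a Coxeter system with length function ℓ, and let S ⊆ I. Suppose w_S, w'_S ∈ W_S and w, w' ∈ W^S are such that there exists a reflection t ∈ T with w_S w = t (w'_S w') and ℓ(w_S w) = ℓ(w'_S w') + 1. Then ℓ(w) = ℓ(w') if and only if w = w'. -/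
open List

namespace SEAux
open CoxeterSystem

open scoped Classical

variable {B W : Type*} [Group W] {M : CoxeterMatrix B} (cs : CoxeterSystem M W)

local prefix:100 "s" => cs.simple
local prefix:100 "π" => cs.wordProd
local prefix:100 "ℓ" => cs.length
local prefix:100 "ris" => cs.rightInvSeq
local prefix:100 "lis" => cs.leftInvSeq

theorem simple_conj_eq_iff (i : B) (t : W) : s i * t * s i = s i ↔ t = s i := by
  constructor
  · intro hh
    have h1 : s i * t * s i * s i = s i * s i := congrArg (· * cs.simple i) hh
    rw [cs.simple_mul_simple_cancel_right, cs.simple_mul_simple_self] at h1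
    have h2 : (cs.simple i)⁻¹ = t := by rw [inv_eq_iff_mul_eq_one]; exact h1
    rw [← h2, cs.inv_simple]
  · rintro rfl
    rw [cs.simple_mul_simple_self, one_mul]

noncomputable def fperm (i : B) : Equiv.Perm (W × ZMod 2) :=
  Function.Involutive.toPerm
    (fun p => (s i * p.1 * s i, p.2 + if p.1 = s i then 1 else 0))
    (by
      rintro ⟨t, z⟩
      dsimp only
      by_cases h : t = cs.simple i
      · subst h
        simp [cs.simple_mul_simple_self, add_assoc, show ((1:ZMod 2)+1) = 0 by decide]
      · rw [if_neg h, add_zero, if_neg (fun hh => h ((simple_conj_eq_iff cs i t).mp hh)),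
          add_zero]
        have : s i * (s i * t * s i) * s i = t := by
          simp only [← mul_assoc]
          rw [cs.simple_mul_simple_self, one_mul, mul_assoc, cs.simple_mul_simple_self, mul_one]
        rw [this])

theorem fperm_apply (i : B) (p : W × ZMod 2) :
    fperm cs i p = (s i * p.1 * s i, p.2 + if p.1 = s i then 1 else 0) := rfl

theorem prod_map_fperm (ω : List B) (t : W) (z : ZMod 2) :
    (List.map (fperm cs) ω).prod (t, z) =
      (π ω * t * (π ω)⁻¹, z + (List.count t (ris ω) : ZMod 2)) := by
  induction ω generalizing z with
  | nil => simp [CoxeterSystem.rightInvSeq]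
  | cons i ω ih =>
    rw [List.map_cons, List.prod_cons, Equiv.Perm.mul_apply, ih, fperm_apply]
    have hris : ris (i :: ω) = ((π ω)⁻¹ * s i * π ω) :: ris ω := rfl
    rw [hris, List.count_cons]
    dsimp only
    rw [Prod.mk.injEq]
    have hπ : π (i :: ω) * t * (π (i :: ω))⁻¹ = s i * (π ω * t * (π ω)⁻¹) * s i := by
      rw [cs.wordProd_cons, mul_inv_rev, cs.inv_simple]; group
    by_cases h : (π ω)⁻¹ * s i * π ω = t
    · have h' : π ω * t * (π ω)⁻¹ = s i := by rw [← h]; group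
      rw [if_pos h', hπ]
      refine ⟨rfl, ?_⟩
      simp only [beq_iff_eq, if_pos h]
      push_cast
      ring
    · have h' : ¬ (π ω * t * (π ω)⁻¹ = s i) := by
        intro hh; apply h; rw [← hh]; group
      rw [if_neg h', hπ]
      refine ⟨rfl, ?_⟩
      simp only [beq_iff_eq, if_neg h]
      push_cast
      ring

theorem alt_two_mul_succ (i j : B) (m : ℕ) :
    alternatingWord i j (2 * (m + 1)) = i :: j :: alternatingWord i j (2 * m) := by
  have h1 : 2 * (m + 1) = (2 * m + 1) + 1 := by ring
  rw [h1, alternatingWord_succ' i j (2 * m + 1), alternatingWord_succ' i j (2 * m)]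
  simp [Nat.even_add_one, parity_simps]

theorem prod_map_alt {G : Type*} [Monoid G] (g : B → G) (i j : B) (m : ℕ) :
    (List.map g (alternatingWord i j (2 * m))).prod = (g i * g j) ^ m := by
  induction m with
  | zero => simp [alternatingWord]
  | succ m ih =>
    rw [alt_two_mul_succ, List.map_cons, List.map_cons, List.prod_cons, List.prod_cons, ih,
      pow_succ']
    rw [mul_assoc]

theorem alt_drop (i j : B) :
    ∀ (a n : ℕ), (alternatingWord i j n).drop a = alternatingWord i j (n - a) := by
  intro a
  induction a with
  | zero => simp
  | succ a ih =>
    intro n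
    match n with
    | 0 => simp [alternatingWord]
    | n + 1 =>
      rw [alternatingWord_succ' i j n]
      show (alternatingWord i j n).drop a = _
      rw [ih n]
      congr 1
      omega

theorem sj_mul_pow (i j : B) (e : ℕ) :
    s j * (s i * s j) ^ e = (s j * s i) ^ e * s j := by
  induction e with
  | zero => simp
  | succ e ih =>
    rw [pow_succ, ← mul_assoc, ih, pow_succ]
    group

theorem conj_pow_sj (i j : B) (e : ℕ) :
    ((s i * s j) ^ e)⁻¹ * s j * (s i * s j) ^ e = (s j * s i) ^ (2 * e) * s j := by
  have hpinv : ((s i * s j) ^ e)⁻¹ = (s j * s i) ^ e := by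
    rw [← inv_pow, mul_inv_rev, cs.inv_simple, cs.inv_simple]
  rw [mul_assoc, sj_mul_pow, hpinv, ← mul_assoc, ← pow_add, two_mul]

theorem getD_ris_alt (i j : B) (m k : ℕ) (hk : k < 2 * m) :
    (ris (alternatingWord i j (2 * m))).getD k 1 = (s j * s i) ^ (2 * m - 1 - k) * s j := by
  set n := 2 * m - 1 - k with hn
  rw [cs.getD_rightInvSeq]
  rw [alt_drop i j (k + 1) (2 * m)]
  have h2 : 2 * m - (k + 1) = n := by omega
  rw [h2]
  have hget : (alternatingWord i j (2 * m))[k]? = some (if Even n then j else i) := by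
    have h3 := (List.getElem?_drop (xs := alternatingWord i j (2 * m)) (i := k) (j := 0))
    rw [Nat.add_zero] at h3
    rw [← h3, alt_drop i j k (2 * m), show 2 * m - k = n + 1 by omega,
      alternatingWord_succ' i j n]
    simp
  rw [hget]
  rw [cs.prod_alternatingWord_eq_mul_pow]
  by_cases hev : Even n
  · rw [if_pos hev, if_pos hev, one_mul]
    simp only [Option.map_some, Option.getD_some]
    rw [conj_pow_sj]
    congr 1
    congr 1
    rw [Nat.even_iff] at hev
    omega
  · rw [if_neg hev, if_neg hev]
    simp only [Option.map_some, Option.getD_some]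
    set e := n / 2 with he
    have hsplit : (s j * (s i * s j) ^ e)⁻¹ * s i * (s j * (s i * s j) ^ e)
        = ((s i * s j) ^ e)⁻¹ * (s j * s i * s j) * (s i * s j) ^ e := by
      rw [mul_inv_rev, cs.inv_simple]
      group
    rw [hsplit]
    have hpinv : ((s i * s j) ^ e)⁻¹ = (s j * s i) ^ e := by
      rw [← inv_pow, mul_inv_rev, cs.inv_simple, cs.inv_simple]
    rw [hpinv, mul_assoc ((s j * s i) ^ e), mul_assoc (s j * s i) (s j), sj_mul_pow cs i j e,
      show (s j * s i) * ((s j * s i) ^ e * s j) = (s j * s i) ^ (e + 1) * s j by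
        rw [← mul_assoc, ← pow_succ'],
      ← mul_assoc, ← pow_add]
    congr 2
    rw [Nat.even_iff] at hev
    omega

theorem even_count_ris_alt (i j : B) (t : W) :
    Even (List.count t (ris (alternatingWord i j (2 * M i j)))) := by
  set m := M i j with hm
  set L := ris (alternatingWord i j (2 * m)) with hL
  have hlen : L.length = 2 * m := by
    rw [hL, cs.length_rightInvSeq, length_alternatingWord]
  have htd : L.take m = L.drop m := by
    apply List.ext_getElem
    · simp [hlen]; omega
    · intro r h1 h2
      simp only [length_take, hlen] at h1
      have hr : r < m := by omega
      rw [List.getElem_take, List.getElem_drop]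
      rw [← List.getD_eq_getElem L 1, ← List.getD_eq_getElem L 1]
      rw [hL, getD_ris_alt cs i j m r (by omega), getD_ris_alt cs i j m (m + r) (by omega)]
      have hsp : 2 * m - 1 - r = m + (m - 1 - r) := by omega
      rw [hsp, pow_add]
      have hq : (cs.simple j * cs.simple i) ^ m = 1 := cs.simple_mul_simple_pow' i j
      rw [hq, one_mul]
      congr 2
      omega
  have hsplit : L = L.take m ++ L.drop m := (List.take_append_drop m L).symm
  refine ⟨List.count t (L.take m), ?_⟩
  conv_lhs => rw [hsplit]
  rw [List.count_append, htd]


theorem isLiftable_fperm : M.IsLiftable (fperm cs) := by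
  intro i j
  have h1 : (fperm cs i * fperm cs j) ^ M i j
      = (List.map (fperm cs) (alternatingWord i j (2 * M i j))).prod :=
    (prod_map_alt (fperm cs) i j (M i j)).symm
  rw [h1]
  apply Equiv.ext
  rintro ⟨t, z⟩
  rw [prod_map_fperm]
  have hπ : π (alternatingWord i j (2 * M i j)) = 1 := by
    show (List.map cs.simple _).prod = 1
    rw [prod_map_alt, cs.simple_mul_simple_pow]
  rw [hπ]
  obtain ⟨r, hr⟩ := even_count_ris_alt cs i j t
  rw [hr]
  simp only [Equiv.Perm.one_apply, one_mul, inv_one, mul_one, Prod.mk.injEq]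
  refine ⟨trivial, ?_⟩
  push_cast
  rw [← two_mul, show (2 : ZMod 2) = 0 by decide, zero_mul, add_zero]

noncomputable def mu : W →* Equiv.Perm (W × ZMod 2) :=
  cs.lift ⟨fperm cs, isLiftable_fperm cs⟩

theorem mu_simple (i : B) : mu cs (s i) = fperm cs i :=
  cs.lift_apply_simple (isLiftable_fperm cs) i

theorem mu_wordProd (ω : List B) : mu cs (π ω) = (List.map (fperm cs) ω).prod := by
  induction ω with
  | nil => simp
  | cons i ω ih =>
    rw [cs.wordProd_cons, map_mul, mu_simple, List.map_cons, List.prod_cons, ih]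

theorem mu_apply (w : W) (ω : List B) (hω : π ω = w) (t : W) (z : ZMod 2) :
    mu cs w (t, z) = (w * t * w⁻¹, z + (List.count t (ris ω) : ZMod 2)) := by
  rw [← hω, mu_wordProd, prod_map_fperm]

theorem mu_refl (t : W) (ht : cs.IsReflection t) (z : ZMod 2) :
    mu cs t (t, z) = (t, z + 1) := by
  obtain ⟨u, i, rfl⟩ := ht
  obtain ⟨υ, hυ⟩ := cs.wordProd_surjective u
  set b : ZMod 2 := (List.count (s i) (ris υ) : ZMod 2) with hb
  have h1 : ∀ y : ZMod 2, mu cs u (s i, y) = (u * s i * u⁻¹, y + b) :=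
    fun y => mu_apply cs u υ hυ (s i) y
  have h2 : mu cs u⁻¹ (u * s i * u⁻¹, z) = (s i, z - b) := by
    rw [map_inv]
    rw [Equiv.Perm.inv_def, Equiv.symm_apply_eq, h1, sub_add_cancel]
  rw [show u * s i * u⁻¹ = u * (s i * u⁻¹) by group, map_mul, map_mul]
  rw [Equiv.Perm.mul_apply, Equiv.Perm.mul_apply,
    show u * (s i * u⁻¹) = u * s i * u⁻¹ by group, h2, mu_simple, fperm_apply]
  dsimp only
  rw [if_pos rfl]
  have h3 : s i * s i * s i = s i := by
    rw [cs.simple_mul_simple_self, one_mul]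
  rw [h3, h1]
  rw [Prod.mk.injEq]
  exact ⟨rfl, by ring⟩

theorem count_parity_eq (ω ψ : List B) (hωψ : π ω = π ψ) (t : W) :
    (List.count t (ris ω) : ZMod 2) = (List.count t (ris ψ) : ZMod 2) := by
  have h1 := mu_apply cs (π ψ) ω hωψ t 0
  have h2 := mu_apply cs (π ψ) ψ rfl t 0
  rw [h1] at h2
  have := (Prod.mk.injEq _ _ _ _).mp h2
  simpa using this.2

theorem count_odd_of_rightInversion (w t : W) (ht : cs.IsReflection t)
    (hlt : ℓ (w * t) < ℓ w) (ω : List B) (hω : π ω = w) :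
    (List.count t (ris ω) : ZMod 2) = 1 := by
  by_contra hc
  have h01 : ∀ x : ZMod 2, x = 0 ∨ x = 1 := by decide
  have hc0 : (List.count t (ris ω) : ZMod 2) = 0 := by
    rcases h01 (List.count t (ris ω) : ZMod 2) with h | h
    · exact h
    · exact absurd h hc
  obtain ⟨ψ, hψred, hψ⟩ := cs.exists_reduced_word' (w * t)
  -- compute parity of count t (ris ψ)
  have h1 : mu cs (w * t) (t, 0) = (w * t * t * (w * t)⁻¹, 0 + (List.count t (ris ψ) : ZMod 2)) :=
    mu_apply cs (w * t) ψ hψ.symm t 0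
  have h2 : mu cs (w * t) (t, 0) = ((w * t) * t * (w * t)⁻¹, 1 + (List.count t (ris ω) : ZMod 2)) := by
    rw [map_mul, Equiv.Perm.mul_apply, mu_refl cs t ht, mu_apply cs w ω hω, zero_add]
    rw [Prod.mk.injEq]
    constructor
    · group
    · ring
  rw [h1] at h2
  have h3 : (List.count t (ris ψ) : ZMod 2) = 1 := by
    have := (Prod.mk.injEq _ _ _ _).mp h2
    rw [hc0, add_zero] at this
    simpa using this.2
  have h4 : t ∈ ris ψ := by
    rw [← List.count_pos_iff]
    rcases Nat.eq_zero_or_pos (List.count t (ris ψ)) with h | h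
    · rw [h] at h3
      exact absurd h3 (by decide)
    · exact h
  have h5 := cs.isRightInversion_of_mem_rightInvSeq hψred h4
  rw [← hψ] at h5
  have h6 : w * t * t = w := by
    rw [mul_assoc, ht.mul_self, mul_one]
  have h7 := h5.2
  rw [h6] at h7
  omega

theorem right_exchange (ω : List B) (hred : cs.IsReduced ω) (t : W) (ht : cs.IsReflection t)
    (hlt : ℓ (π ω * t) < ℓ (π ω)) :
    ∃ j < ω.length, π ω * t = π (ω.eraseIdx j) := by
  have h1 := count_odd_of_rightInversion cs (π ω) t ht hlt ω rfl
  have h2 : t ∈ ris ω := by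
    rw [← List.count_pos_iff]
    rcases Nat.eq_zero_or_pos (List.count t (ris ω)) with h | h
    · rw [h] at h1
      exact absurd h1 (by decide)
    · exact h
  obtain ⟨j, hj, hjt⟩ := List.getElem_of_mem h2
  have hjlen : j < ω.length := by
    rw [← cs.length_rightInvSeq ω]
    exact hj
  refine ⟨j, hjlen, ?_⟩
  have h3 : (ris ω).getD j 1 = t := by
    rw [List.getD_eq_getElem _ _ hj, hjt]
  rw [← h3, cs.wordProd_mul_getD_rightInvSeq]

theorem reverse_eraseIdx_reverse {X : Type*} (l : List X) (j : ℕ) (hj : j < l.length) :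
    (l.reverse.eraseIdx j).reverse = l.eraseIdx (l.length - 1 - j) := by
  rw [List.eraseIdx_eq_take_drop_succ, List.eraseIdx_eq_take_drop_succ, List.reverse_append,
    List.take_reverse, List.drop_reverse, List.reverse_reverse, List.reverse_reverse]
  congr 2
  · omega
  · omega

theorem left_exchange (ω : List B) (hred : cs.IsReduced ω) (t : W) (ht : cs.IsReflection t)
    (hlt : ℓ (t * π ω) < ℓ (π ω)) :
    ∃ j < ω.length, t * π ω = π (ω.eraseIdx j) := by
  have hrev : cs.IsReduced ω.reverse := (cs.isReduced_reverse_iff ω).mpr hred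
  have hπrev : π ω.reverse = (π ω)⁻¹ := cs.wordProd_reverse ω
  have hlt2 : ℓ (π ω.reverse * t) < ℓ (π ω.reverse) := by
    rw [hπrev]
    have e1 : ℓ ((π ω)⁻¹ * t) = ℓ (t * π ω) := by
      rw [← cs.length_inv ((π ω)⁻¹ * t), mul_inv_rev, inv_inv, ht.inv]
    rw [e1, cs.length_inv]
    exact hlt
  obtain ⟨j, hjlen, hj⟩ := right_exchange cs ω.reverse hrev t ht hlt2
  rw [List.length_reverse] at hjlen
  refine ⟨ω.length - 1 - j, by omega, ?_⟩
  have h4 : t * π ω = (π ω.reverse * t)⁻¹ := by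
    rw [hπrev, mul_inv_rev, inv_inv, ht.inv]
  rw [h4, hj, ← cs.wordProd_reverse, reverse_eraseIdx_reverse ω j hjlen]


variable (S : Set B)

theorem wordProd_mem_closure (α : List B) (hα : ∀ b ∈ α, b ∈ S) :
    π α ∈ Subgroup.closure (cs.simple '' S) := by
  induction α with
  | nil => simp only [CoxeterSystem.wordProd_nil]; exact one_mem _
  | cons i α ih =>
    rw [cs.wordProd_cons]
    exact mul_mem (Subgroup.subset_closure ⟨i, hα i (by simp), rfl⟩)
      (ih (fun b hb => hα b (by simp [hb])))

theorem exists_word_of_mem_closure (p : W) (hp : p ∈ Subgroup.closure (cs.simple '' S)) :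
    ∃ α : List B, (∀ b ∈ α, b ∈ S) ∧ π α = p := by
  induction hp using Subgroup.closure_induction with
  | mem x hx =>
    obtain ⟨i, hi, rfl⟩ := hx
    exact ⟨[i], by simpa using hi, by simp⟩
  | one => exact ⟨[], by simp, by simp⟩
  | mul x y hx hy ihx ihy =>
    obtain ⟨α, hα, hπα⟩ := ihx
    obtain ⟨β, hβ, hπβ⟩ := ihy
    refine ⟨α ++ β, ?_, ?_⟩
    · intro b hb
      rcases List.mem_append.mp hb with h | h
      · exact hα b h
      · exact hβ b h
    · rw [cs.wordProd_append, hπα, hπβ]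
  | inv x hx ihx =>
    obtain ⟨α, hα, hπα⟩ := ihx
    exact ⟨α.reverse, fun b hb => hα b (List.mem_reverse.mp hb),
      by rw [cs.wordProd_reverse, hπα]⟩

theorem exists_reduced_word_over_aux :
    ∀ (n : ℕ) (α : List B), α.length ≤ n → (∀ b ∈ α, b ∈ S) →
      ∃ β : List B, (∀ b ∈ β, b ∈ S) ∧ π β = π α ∧ cs.IsReduced β := by
  intro n
  induction n with
  | zero =>
    intro α hlen _
    have : α = [] := List.eq_nil_of_length_eq_zero (by omega)
    subst this
    exact ⟨[], by simp, rfl, by simp [CoxeterSystem.IsReduced]⟩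
  | succ n ih =>
    intro α hlen hα
    by_cases hred : cs.IsReduced α
    · exact ⟨α, hα, rfl, hred⟩
    · have hαne : α ≠ [] := by
        rintro rfl
        exact hred (by simp [CoxeterSystem.IsReduced])
      have hα1 : 1 ≤ α.length := by
        cases α with
        | nil => exact absurd rfl hαne
        | cons a l => simp
      have hex : ∃ k, ¬ cs.IsReduced (α.take (k + 1)) := by
        refine ⟨α.length - 1, ?_⟩
        rw [show α.length - 1 + 1 = α.length by omega, List.take_length]
        exact hred
      classical
      obtain ⟨k, hkspec, hkmin⟩ : ∃ k, (¬ cs.IsReduced (α.take (k + 1))) ∧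
          ∀ k' < k, cs.IsReduced (α.take (k' + 1)) := by
        refine ⟨Nat.find hex, Nat.find_spec hex, ?_⟩
        intro k' hk'
        have := Nat.find_min hex hk'
        rwa [not_not] at this
      have hklen : k ≤ α.length - 1 := by
        by_contra hcon
        push_neg at hcon
        have := hkmin (α.length - 1) (by omega)
        rw [show α.length - 1 + 1 = α.length by omega, List.take_length] at this
        exact hred this
      have hklt : k < α.length := by omega
      have hkred : cs.IsReduced (α.take k) := by
        cases k with
        | zero => simp [CoxeterSystem.IsReduced]
        | succ k' => exact hkmin k' (by omega)
      have htake : α.take (k + 1) = α.take k ++ [α[k]'hklt] := by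
        rw [List.take_succ, List.getElem?_eq_getElem hklt]
        rfl
      have hx : ℓ (π (α.take k)) = k := by
        have := hkred
        rw [CoxeterSystem.IsReduced] at this
        rw [this, List.length_take]
        omega
      have hxi : π (α.take (k + 1)) = π (α.take k) * s (α[k]'hklt) := by
        rw [htake, cs.wordProd_append, cs.wordProd_singleton]
      have hlt : ℓ (π (α.take k) * s (α[k]'hklt)) < ℓ (π (α.take k)) := by
        rcases cs.length_mul_simple (π (α.take k)) (α[k]'hklt) with h | h
        · exfalso
          apply hkspec
          rw [CoxeterSystem.IsReduced, hxi, h, hx, List.length_take]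
          omega
        · omega
      obtain ⟨j, hj, hjer⟩ := right_exchange cs (α.take k) hkred (s (α[k]'hklt))
        (cs.isReflection_simple _) hlt
      set β₀ : List B := ((α.take k).eraseIdx j) ++ α.drop (k + 1) with hβ₀
      have hπβ₀ : π β₀ = π α := by
        rw [hβ₀, cs.wordProd_append, ← hjer, ← hxi, ← cs.wordProd_append,
          List.take_append_drop]
      have hβ₀S : ∀ b ∈ β₀, b ∈ S := by
        intro b hb
        rcases List.mem_append.mp hb with h | h
        · exact hα b (List.take_subset k α (List.mem_of_mem_eraseIdx h))
        · exact hα b (List.drop_subset (k+1) α h)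
      have hjlt : j < (α.take k).length := hj
      have hβ₀len : β₀.length ≤ n := by
        rw [hβ₀, List.length_append, List.length_eraseIdx_of_lt hjlt,
          List.length_take_of_le (le_of_lt hklt), List.length_drop]
        omega
      obtain ⟨β, h1, h2, h3⟩ := ih β₀ hβ₀len hβ₀S
      exact ⟨β, h1, by rw [h2, hπβ₀], h3⟩

theorem exists_reduced_word_over (p : W) (hp : p ∈ Subgroup.closure (cs.simple '' S)) :
    ∃ α : List B, (∀ b ∈ α, b ∈ S) ∧ π α = p ∧ cs.IsReduced α := by
  obtain ⟨α, hα, hπα⟩ := exists_word_of_mem_closure cs S p hp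
  obtain ⟨β, h1, h2, h3⟩ := exists_reduced_word_over_aux cs S α.length α le_rfl hα
  exact ⟨β, h1, by rw [h2, hπα], h3⟩


theorem length_mul_of_min (w : W)
    (hw : ∀ v ∈ Subgroup.closure (cs.simple '' S), ℓ (v * w) ≥ ℓ w) :
    ∀ (n : ℕ) (p : W), p ∈ Subgroup.closure (cs.simple '' S) → ℓ p ≤ n →
      ℓ (p * w) = ℓ p + ℓ w := by
  intro n
  induction n with
  | zero =>
    intro p hp hlp
    have h1 : p = 1 := cs.length_eq_zero_iff.mp (by omega)
    subst h1
    simp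
  | succ n ih =>
    intro p hp hlp
    by_cases h0 : ℓ p ≤ n
    · exact ih p hp h0
    have hlpn : ℓ p = n + 1 := by omega
    obtain ⟨α, hαS, hπα, hαred⟩ := exists_reduced_word_over cs S p hp
    cases α with
    | nil =>
      exfalso
      have : p = 1 := by rw [← hπα, cs.wordProd_nil]
      rw [this, cs.length_one] at hlpn
      omega
    | cons i α₁ =>
      have hℓα : ℓ p = α₁.length + 1 := by
        have h2 := hαred
        rw [CoxeterSystem.IsReduced] at h2
        rw [← hπα, h2, List.length_cons]
      have hcons : p = s i * π α₁ := by rw [← hπα, cs.wordProd_cons]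
      have hℓp₁le : ℓ (π α₁) ≤ α₁.length := cs.length_wordProd_le α₁
      have hℓp₁ge : α₁.length ≤ ℓ (π α₁) := by
        have h3 := cs.length_mul_le (s i) (π α₁)
        rw [← hcons, cs.length_simple] at h3
        omega
      have hα₁red : cs.IsReduced α₁ := by
        rw [CoxeterSystem.IsReduced]
        omega
      have hp₁mem : π α₁ ∈ Subgroup.closure (cs.simple '' S) :=
        wordProd_mem_closure cs S α₁ (fun b hb => hαS b (List.mem_cons_of_mem i hb))
      have hiS : i ∈ S := hαS i (List.mem_cons_self (a := i) (l := α₁))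
      have hIH : ℓ (π α₁ * w) = ℓ (π α₁) + ℓ w := ih (π α₁) hp₁mem (by omega)
      have hℓsp : ℓ (s i * π α₁) = α₁.length + 1 := by rw [← hcons]; exact hℓα
      rcases cs.length_simple_mul (π α₁ * w) i with h | h
      · rw [hcons, mul_assoc, h, hIH]
        omega
      · exfalso
        obtain ⟨ωw, hωred, hωw⟩ := cs.exists_reduced_word' w
        have hcatπ : π (α₁ ++ ωw) = π α₁ * w := by rw [cs.wordProd_append, ← hωw]
        have hωlen : ℓ w = ωw.length := by rw [hωw]; exact hωred
        have hα₁len : ℓ (π α₁) = α₁.length := hα₁red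
        have hcatred : cs.IsReduced (α₁ ++ ωw) := by
          rw [CoxeterSystem.IsReduced, hcatπ, hIH, List.length_append]
          omega
        have hlt2 : ℓ (s i * π (α₁ ++ ωw)) < ℓ (π (α₁ ++ ωw)) := by
          rw [hcatπ]
          omega
        obtain ⟨j, hj, hjer⟩ := left_exchange cs (α₁ ++ ωw) hcatred (s i)
          (cs.isReflection_simple i) hlt2
        rw [hcatπ] at hjer
        by_cases hjsplit : j < α₁.length
        · rw [List.eraseIdx_append_of_lt_length hjsplit, cs.wordProd_append, ← hωw] at hjer
          have hc : s i * π α₁ = π (α₁.eraseIdx j) := by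
            have h5 := hjer
            rw [← mul_assoc] at h5
            exact mul_right_cancel h5
          have hlen1 : ℓ (s i * π α₁) ≤ α₁.length - 1 := by
            rw [hc]
            calc ℓ (π (α₁.eraseIdx j)) ≤ (α₁.eraseIdx j).length := cs.length_wordProd_le _
            _ = α₁.length - 1 := List.length_eraseIdx_of_lt hjsplit
          rw [← hcons] at hlen1
          omega
        · push_neg at hjsplit
          rw [List.eraseIdx_append_of_length_le hjsplit, cs.wordProd_append] at hjer
          have hwhat : ((π α₁)⁻¹ * s i * π α₁) * w = π (ωw.eraseIdx (j - α₁.length)) := by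
            calc ((π α₁)⁻¹ * s i * π α₁) * w = (π α₁)⁻¹ * (s i * (π α₁ * w)) := by group
            _ = (π α₁)⁻¹ * (π α₁ * π (ωw.eraseIdx (j - α₁.length))) := by rw [hjer]
            _ = π (ωw.eraseIdx (j - α₁.length)) := by group
          have hqmem : (π α₁)⁻¹ * s i * π α₁ ∈ Subgroup.closure (cs.simple '' S) :=
            mul_mem (mul_mem (inv_mem hp₁mem) (Subgroup.subset_closure ⟨i, hiS, rfl⟩)) hp₁mem
          have hge := hw _ hqmem
          have hj' : j - α₁.length < ωw.length := by
            rw [List.length_append] at hj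
            omega
          have hle : ℓ (((π α₁)⁻¹ * s i * π α₁) * w) ≤ ωw.length - 1 := by
            rw [hwhat]
            calc ℓ (π (ωw.eraseIdx (j - α₁.length))) ≤ (ωw.eraseIdx (j - α₁.length)).length :=
              cs.length_wordProd_le _
            _ = ωw.length - 1 := List.length_eraseIdx_of_lt hj'
          omega

end SEAux


/-- First assertion of Lemma 2.2(ii) of Heckenberger–Kolb: if `w_S w → w'_S w'` with
`w_S, w'_S` in the standard parabolic subgroup `W_S` and `w, w'` minimal length coset
representatives, then `ℓ(w) = ℓ(w')` if and only if `w = w'`. -/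
theorem length_eq_iff_eq_of_arrow_parabolic_decomposition
    {B W : Type*} [Group W] {M : CoxeterMatrix B} (cs : CoxeterSystem M W)
    (S : Set B)
    (wS wS' : W)
    (hwS : wS ∈ Subgroup.closure (cs.simple '' S))
    (hwS' : wS' ∈ Subgroup.closure (cs.simple '' S))
    (w w' : W)
    (hw : ∀ v ∈ Subgroup.closure (cs.simple '' S),
      cs.length (v * w) ≥ cs.length w)
    (hw' : ∀ v ∈ Subgroup.closure (cs.simple '' S),
      cs.length (v * w') ≥ cs.length w')
    (t : W) (ht : cs.IsReflection t)
    (heq : wS * w = t * (wS' * w'))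
    (hlen : cs.length (wS * w) = cs.length (wS' * w') + 1) :
    cs.length w = cs.length w' ↔ w = w' := by
  classical
  obtain ⟨α, hαS, hπα, hαred⟩ := SEAux.exists_reduced_word_over cs S wS hwS
  obtain ⟨ωw, hωred, hωw⟩ := cs.exists_reduced_word' w
  have hadd : ∀ p ∈ Subgroup.closure (cs.simple '' S),
      cs.length (p * w) = cs.length p + cs.length w :=
    fun p hp => SEAux.length_mul_of_min cs S w hw (cs.length p) p hp le_rfl
  have hadd' : ∀ p ∈ Subgroup.closure (cs.simple '' S),
      cs.length (p * w') = cs.length p + cs.length w' :=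
    fun p hp => SEAux.length_mul_of_min cs S w' hw' (cs.length p) p hp le_rfl
  have hℓwS : cs.length wS = α.length := by rw [← hπα]; exact hαred
  have hℓw : cs.length w = ωw.length := by rw [hωw]; exact hωred
  have hcatπ : cs.wordProd (α ++ ωw) = wS * w := by
    rw [cs.wordProd_append, hπα, ← hωw]
  have hcatred : cs.IsReduced (α ++ ωw) := by
    rw [CoxeterSystem.IsReduced, hcatπ, hadd wS hwS, List.length_append]
    omega
  have htx : t * (wS * w) = wS' * w' := by
    rw [heq, ← mul_assoc, ht.mul_self, one_mul]
  have hlt : cs.length (t * cs.wordProd (α ++ ωw)) < cs.length (cs.wordProd (α ++ ωw)) := by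
    rw [hcatπ, htx]
    omega
  obtain ⟨j, hj, hjer⟩ := SEAux.left_exchange cs (α ++ ωw) hcatred t ht hlt
  rw [hcatπ, htx] at hjer
  by_cases hjs : j < α.length
  · rw [List.eraseIdx_append_of_lt_length hjs, cs.wordProd_append, ← hωw] at hjer
    have hvmem : cs.wordProd (α.eraseIdx j) ∈ Subgroup.closure (cs.simple '' S) :=
      SEAux.wordProd_mem_closure cs S _ (fun b hb => hαS b (List.mem_of_mem_eraseIdx hb))
    have humem : wS'⁻¹ * cs.wordProd (α.eraseIdx j) ∈ Subgroup.closure (cs.simple '' S) :=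
      mul_mem (inv_mem hwS') hvmem
    have hw'eq : w' = (wS'⁻¹ * cs.wordProd (α.eraseIdx j)) * w := by
      rw [mul_assoc, ← hjer]
      group
    have hweq : w = (wS'⁻¹ * cs.wordProd (α.eraseIdx j))⁻¹ * w' := by
      rw [hw'eq]
      group
    have e1 := hadd _ humem
    rw [← hw'eq] at e1
    have e2 := hadd' _ (inv_mem humem)
    rw [← hweq] at e2
    have e3 : cs.length ((wS'⁻¹ * cs.wordProd (α.eraseIdx j))⁻¹)
        = cs.length (wS'⁻¹ * cs.wordProd (α.eraseIdx j)) := cs.length_inv _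
    have hu0 : cs.length (wS'⁻¹ * cs.wordProd (α.eraseIdx j)) = 0 := by omega
    have hu1 : wS'⁻¹ * cs.wordProd (α.eraseIdx j) = 1 := cs.length_eq_zero_iff.mp hu0
    have hww : w' = w := by rw [hw'eq, hu1, one_mul]
    rw [hww]
    simp
  · push_neg at hjs
    rw [List.eraseIdx_append_of_length_le hjs, cs.wordProd_append, hπα] at hjer
    have hwhateq : (wS⁻¹ * wS') * w' = cs.wordProd (ωw.eraseIdx (j - α.length)) := by
      calc (wS⁻¹ * wS') * w' = wS⁻¹ * (wS' * w') := by group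
      _ = wS⁻¹ * (wS * cs.wordProd (ωw.eraseIdx (j - α.length))) := by rw [hjer]
      _ = cs.wordProd (ωw.eraseIdx (j - α.length)) := by group
    have hqmem : wS⁻¹ * wS' ∈ Subgroup.closure (cs.simple '' S) :=
      mul_mem (inv_mem hwS) hwS'
    have e1 := hadd' _ hqmem
    have hj' : j - α.length < ωw.length := by
      rw [List.length_append] at hj
      omega
    have e2 : cs.length ((wS⁻¹ * wS') * w') ≤ ωw.length - 1 := by
      rw [hwhateq]
      calc cs.length (cs.wordProd (ωw.eraseIdx (j - α.length)))
          ≤ (ωw.eraseIdx (j - α.length)).length := cs.length_wordProd_le _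
      _ = ωw.length - 1 := List.length_eraseIdx_of_lt hj'
    have hne : cs.length w ≠ cs.length w' := by omega
    constructor
    · intro hh
      exact absurd hh hne
    · intro hh
      exfalso
      apply hne
      rw [hh]
end

section
/- Let (W, {s_i}_{i∈I}) be a Coxeter system with length function ℓ, and let S ⊆ I. Let i ∈ S and w^S ∈ W^S. Suppose w' ∈ W^S is such that s_i w^S → w' holds, i.e., there exists a reflection t ∈ T with s_i w^S = t w' and ℓ(s_i w^S) = ℓ(w') + 1. Then w' = w^S. -/
namespace HKCoxAux

open List CoxeterSystem

open scoped Classical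

variable {B W : Type*} [Group W] {M : CoxeterMatrix B} (cs : CoxeterSystem M W)

local prefix:100 "s" => cs.simple
local prefix:100 "π" => cs.wordProd
local prefix:100 "ℓ" => cs.length

theorem ris_append (ω τ : List B) :
    cs.rightInvSeq (ω ++ τ) =
      (cs.rightInvSeq ω).map (fun u => (π τ)⁻¹ * u * (π τ)) ++ cs.rightInvSeq τ := by
  induction ω with
  | nil => simp
  | cons i ω ih =>
      dsimp [CoxeterSystem.rightInvSeq]
      rw [ih]
      simp [cs.wordProd_append, mul_assoc, mul_inv_rev]

noncomputable def phi (i : B) : Equiv.Perm (W × ZMod 2) where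
  toFun p := (s i * p.1 * s i, p.2 + if p.1 = s i then 1 else 0)
  invFun p := (s i * p.1 * s i, p.2 + if p.1 = s i then 1 else 0)
  left_inv p := by
    obtain ⟨t, z⟩ := p
    have h1 : s i * (s i * t * s i) * s i = t := by
      simp [← mul_assoc, cs.simple_mul_simple_self, cs.simple_mul_simple_cancel_right]
    have h2 : (s i * t * s i = s i) ↔ (t = s i) := by
      constructor
      · intro h
        have := congrArg (fun x => s i * x * s i) h
        simpa [← mul_assoc, cs.simple_mul_simple_self,
          cs.simple_mul_simple_cancel_right] using this
      · rintro rfl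
        simp [cs.simple_mul_simple_self]
    simp only [h1, h2, Prod.mk.injEq, true_and]
    by_cases h : t = s i <;> simp [h, add_assoc] <;> decide
  right_inv p := by
    obtain ⟨t, z⟩ := p
    have h1 : s i * (s i * t * s i) * s i = t := by
      simp [← mul_assoc, cs.simple_mul_simple_self, cs.simple_mul_simple_cancel_right]
    have h2 : (s i * t * s i = s i) ↔ (t = s i) := by
      constructor
      · intro h
        have := congrArg (fun x => s i * x * s i) h
        simpa [← mul_assoc, cs.simple_mul_simple_self,
          cs.simple_mul_simple_cancel_right] using this
      · rintro rfl
        simp [cs.simple_mul_simple_self]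
    simp only [h1, h2, Prod.mk.injEq, true_and]
    by_cases h : t = s i <;> simp [h, add_assoc] <;> decide

theorem prod_phi_apply (ω : List B) (t : W) (z : ZMod 2) :
    ((ω.map (phi cs)).prod) (t, z)
      = (π ω * t * (π ω)⁻¹, z + ((cs.rightInvSeq ω).count t : ZMod 2)) := by
  induction ω with
  | nil => simp
  | cons i ω ih =>
      rw [List.map_cons, List.prod_cons, Equiv.Perm.mul_apply, ih]
      show (s i * (π ω * t * (π ω)⁻¹) * s i, _) = _
      have hcond : (π ω * t * (π ω)⁻¹ = s i) ↔ ((π ω)⁻¹ * s i * π ω = t) := by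
        constructor
        · intro h
          rw [← h]; group
        · intro h
          rw [← h]; group
      refine Prod.ext ?_ ?_
      · show s i * (π ω * t * (π ω)⁻¹) * s i = π (i :: ω) * t * (π (i :: ω))⁻¹
        rw [cs.wordProd_cons]
        simp [mul_assoc, mul_inv_rev, cs.inv_simple]
      · show z + _ + _ = z + _
        have : cs.rightInvSeq (i :: ω) = ((π ω)⁻¹ * s i * π ω) :: cs.rightInvSeq ω := rfl
        rw [this, List.count_cons]
        push_cast [apply_ite (Nat.cast : ℕ → ZMod 2)]
        simp only [beq_iff_eq]
        rw [if_congr hcond rfl rfl, add_assoc]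

theorem shift_pow (a b : W) (n : ℕ) : a * (b * a) ^ n = (a * b) ^ n * a := by
  induction n with
  | zero => simp
  | succ n ih =>
      rw [pow_succ' (b * a) n, ← mul_assoc, ← mul_assoc a b a, mul_assoc, ih, ← mul_assoc,
        ← pow_succ']

theorem ris_alternatingWord (i i' : B) (n : ℕ) :
    cs.rightInvSeq (alternatingWord i i' n)
      = ((List.range n).reverse).map (fun k => s i' * (s i * s i') ^ k) := by
  induction n generalizing i i' with
  | zero => simp [alternatingWord]
  | succ n ih =>
      rw [alternatingWord_succ, cs.rightInvSeq_concat, ih i' i, List.range_succ_eq_map,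
        List.reverse_cons, List.map_append, ← List.map_reverse, List.map_map, List.map_map,
        List.concat_eq_append]
      congr 1
      · apply List.map_congr_left
        rintro k -
        show MulAut.conj (s i') (s i * (s i' * s i) ^ k) = s i' * (s i * s i') ^ (k + 1)
        rw [MulAut.conj_apply, cs.inv_simple, mul_assoc, mul_assoc,
          ← shift_pow (s i') (s i) k, ← mul_assoc (s i) (s i'), ← pow_succ']
      · simp

theorem prod_phi_alt (i i' : B) (m : ℕ) :
    ((alternatingWord i i' (2 * m)).map (phi cs)).prod = (phi cs i * phi cs i') ^ m := by
  induction m with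
  | zero => simp [alternatingWord]
  | succ m ih =>
      have h1 : 2 * (m + 1) = (2 * m + 1) + 1 := by ring
      have hne : ¬ Even (2 * m + 1) := by simp [Nat.even_add_one, parity_simps]
      rw [h1, alternatingWord_succ', if_neg hne, alternatingWord_succ',
        if_pos (even_two_mul m), List.map_cons, List.map_cons, List.prod_cons,
        List.prod_cons, ih, pow_succ']
      rw [mul_assoc]

theorem phi_liftable : CoxeterMatrix.IsLiftable M (phi cs) := by
  intro i i'
  rw [← prod_phi_alt]
  apply Equiv.ext
  rintro ⟨t, z⟩
  rw [prod_phi_apply]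
  have hπ : π (alternatingWord i i' (2 * M i i')) = 1 := by
    rw [cs.prod_alternatingWord_eq_mul_pow, if_pos (even_two_mul _)]
    have h2 : 2 * M i i' / 2 = M i i' := by omega
    rw [h2, cs.simple_mul_simple_pow, one_mul]
  have hcount :
      (((cs.rightInvSeq (alternatingWord i i' (2 * M i i'))).count t : ℕ) : ZMod 2) = 0 := by
    rw [ris_alternatingWord, List.map_reverse, List.count_reverse, two_mul, List.range_add,
      List.map_append, List.count_append, List.map_map]
    have hmaps : List.map ((fun k => s i' * (s i * s i') ^ k) ∘ (fun k => M i i' + k))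
        (List.range (M i i')) = List.map (fun k => s i' * (s i * s i') ^ k)
        (List.range (M i i')) := by
      apply List.map_congr_left
      intro k _
      show s i' * (s i * s i') ^ (M i i' + k) = s i' * (s i * s i') ^ k
      rw [pow_add, cs.simple_mul_simple_pow, one_mul]
    rw [hmaps, Nat.cast_add, CharTwo.add_self_eq_zero]
  rw [hπ, hcount, add_zero]
  simp

theorem count_ris_parity_eq {ω ω' : List B} (h : π ω = π ω') (t : W) :
    (((cs.rightInvSeq ω).count t : ℕ) : ZMod 2)
      = (((cs.rightInvSeq ω').count t : ℕ) : ZMod 2) := by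
  have key : ∀ σ : List B, cs.lift ⟨phi cs, phi_liftable cs⟩ (π σ)
      = ((σ.map (phi cs)).prod) := by
    intro σ
    rw [CoxeterSystem.wordProd, map_list_prod, List.map_map]
    congr 1
    apply List.map_congr_left
    intro j _
    exact cs.lift_apply_simple (phi_liftable cs) j
  have h2 : ((ω.map (phi cs)).prod) (t, 0) = ((ω'.map (phi cs)).prod) (t, 0) := by
    rw [← key ω, ← key ω', h]
  rw [prod_phi_apply, prod_phi_apply, h] at h2
  have := congrArg Prod.snd h2
  simpa using this

theorem count_ris_canonical (j : B) (ρ : List B) :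
    (((cs.rightInvSeq (ρ ++ [j] ++ ρ.reverse)).count (π ρ * s j * (π ρ)⁻¹) : ℕ) : ZMod 2)
      = 1 := by
  induction ρ with
  | nil => simp
  | cons k ρ ih =>
      have hlist : ((k :: ρ) ++ [j] ++ (k :: ρ).reverse)
          = k :: ((ρ ++ [j] ++ ρ.reverse) ++ [k]) := by simp
      have hπσ : π (ρ ++ [j] ++ ρ.reverse) = π ρ * s j * (π ρ)⁻¹ := by
        simp [cs.wordProd_append, cs.wordProd_cons, cs.wordProd_reverse, mul_assoc]
      set t := π ρ * s j * (π ρ)⁻¹ with htdef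
      have htinv : t⁻¹ = t := by
        rw [htdef]
        simp [mul_inv_rev, cs.inv_simple, mul_assoc]
      have htnew : π (k :: ρ) * s j * (π (k :: ρ))⁻¹ = s k * t * s k := by
        rw [cs.wordProd_cons, htdef]
        simp [mul_inv_rev, cs.inv_simple, mul_assoc]
      rw [hlist, htnew]
      have hris : cs.rightInvSeq (k :: ((ρ ++ [j] ++ ρ.reverse) ++ [k]))
          = ((π ((ρ ++ [j] ++ ρ.reverse) ++ [k]))⁻¹ * s k * π ((ρ ++ [j] ++ ρ.reverse) ++ [k]))
            :: cs.rightInvSeq ((ρ ++ [j] ++ ρ.reverse) ++ [k]) := rfl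
      have hπσk : π ((ρ ++ [j] ++ ρ.reverse) ++ [k]) = t * s k := by
        rw [cs.wordProd_append, hπσ, cs.wordProd_singleton]
      rw [hris, ris_append cs, cs.rightInvSeq_singleton, hπσk]
      -- the head entry
      have he : (t * s k)⁻¹ * s k * (t * s k) = (s k * t * s k) * (t * s k) := by
        rw [mul_inv_rev, htinv]
        simp [cs.inv_simple, mul_assoc]
      have hiffA : ((t * s k)⁻¹ * s k * (t * s k) = s k * t * s k) ↔ (t = s k) := by
        rw [he]
        constructor
        · intro h
          have h2 : t * s k = 1 := mul_eq_left.mp h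
          have h3 := mul_eq_one_iff_eq_inv.mp h2
          rwa [cs.inv_simple] at h3
        · intro h'
          rw [h', cs.simple_mul_simple_self, mul_one]
      have hiffB : ((s k : W) = s k * t * s k) ↔ (t = s k) := by
        constructor
        · intro h
          have h' : s k * (t * s k) = s k := by rw [← mul_assoc]; exact h.symm
          have h2 : t * s k = 1 := mul_eq_left.mp h'
          have h3 := mul_eq_one_iff_eq_inv.mp h2
          rwa [cs.inv_simple] at h3
        · intro h'
          rw [h', cs.simple_mul_simple_self, one_mul]
      -- count in the conjugated middle part
      have hinj : Function.Injective (fun u : W => (π [k])⁻¹ * u * (π [k])) := by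
        intro a b hab
        dsimp at hab
        exact mul_left_cancel (mul_right_cancel hab)
      have hfX : s k * t * s k = (fun u : W => (π [k])⁻¹ * u * (π [k])) t := by
        simp [cs.inv_simple, mul_assoc]
      have hmapcount :
          (List.map (fun u : W => (π [k])⁻¹ * u * (π [k]))
            (cs.rightInvSeq (ρ ++ [j] ++ ρ.reverse))).count (s k * t * s k)
          = (cs.rightInvSeq (ρ ++ [j] ++ ρ.reverse)).count t := by
        rw [hfX]
        exact List.count_map_of_injective _ _ hinj t
      rw [List.count_cons, List.count_append, hmapcount]
      simp only [beq_iff_eq]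
      by_cases h : t = s k
      · rw [if_pos (hiffA.mpr h)]
        have he2 : (s k : W) = s k * t * s k := hiffB.mpr h
        rw [← he2]
        rw [List.count_singleton]
        push_cast
        rw [ih]
        simp only [beq_self_eq_true, if_true]
        decide
      · rw [if_neg (fun hc => h (hiffA.mp hc))]
        have hz : List.count (s k * t * s k) [s k] = 0 := by
          apply List.count_eq_zero_of_not_mem
          intro hc
          rcases List.mem_singleton.mp hc with hc'
          exact h (hiffB.mp hc'.symm)
        rw [hz]
        simpa using ih

theorem count_ris_refl {t : W} (hr : cs.IsReflection t) {τ : List B} (hτ : π τ = t) :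
    (((cs.rightInvSeq τ).count t : ℕ) : ZMod 2) = 1 := by
  obtain ⟨v, j, rfl⟩ := hr
  obtain ⟨ρ, rfl⟩ := cs.wordProd_surjective v
  have hcan : π (ρ ++ [j] ++ ρ.reverse) = π ρ * s j * (π ρ)⁻¹ := by
    simp [cs.wordProd_append, cs.wordProd_cons, cs.wordProd_reverse, mul_assoc]
  rw [count_ris_parity_eq cs (hτ.trans hcan.symm)]
  exact count_ris_canonical cs j ρ

theorem mem_ris_of_isRightInversion {t : W} (hr : cs.IsReflection t) {ω : List B}
    (hred : cs.IsReduced ω) (hl : ℓ (π ω * t) < ℓ (π ω)) : t ∈ cs.rightInvSeq ω := by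
  by_contra hmem
  have h0 : (cs.rightInvSeq ω).count t = 0 := List.count_eq_zero_of_not_mem hmem
  obtain ⟨τ, hτ⟩ := cs.wordProd_surjective t
  obtain ⟨ω₂, hred₂, hw₂⟩ := cs.exists_reduced_word' (π ω * t)
  have hprod : π (ω ++ τ) = π ω₂ := by rw [cs.wordProd_append, hτ, ← hw₂]
  have hpar := count_ris_parity_eq cs hprod t
  rw [ris_append cs, List.count_append] at hpar
  have hinj : Function.Injective (fun u : W => (π τ)⁻¹ * u * (π τ)) := by
    intro a b hab
    dsimp at hab
    exact mul_left_cancel (mul_right_cancel hab)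
  have hfix : t = (fun u : W => (π τ)⁻¹ * u * (π τ)) t := by
    rw [hτ]
    dsimp
    rw [hr.inv]  -- t⁻¹ = t ... careful
    rw [hr.mul_self, one_mul]
  have hmapcount : (List.map (fun u : W => (π τ)⁻¹ * u * (π τ))
      (cs.rightInvSeq ω)).count t = (cs.rightInvSeq ω).count t := by
    nth_rewrite 1 [hfix]
    exact List.count_map_of_injective _ _ hinj t
  rw [hmapcount, h0, zero_add] at hpar
  rw [count_ris_refl cs hr hτ] at hpar
  have hne : (cs.rightInvSeq ω₂).count t ≠ 0 := by
    intro h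
    rw [h] at hpar
    simp at hpar
  have hmem₂ : t ∈ cs.rightInvSeq ω₂ :=
    List.count_pos_iff.mp (Nat.pos_of_ne_zero hne)
  have hinv₂ := cs.isRightInversion_of_mem_rightInvSeq hred₂ hmem₂
  rw [← hw₂] at hinv₂
  have h2 := hinv₂.2
  rw [mul_assoc, hr.mul_self, mul_one] at h2
  omega

theorem mem_lis_of_isLeftInversion {t : W} (hr : cs.IsReflection t) {ω : List B}
    (hred : cs.IsReduced ω) (hl : ℓ (t * π ω) < ℓ (π ω)) : t ∈ cs.leftInvSeq ω := by
  have hred' : cs.IsReduced ω.reverse := (cs.isReduced_reverse_iff ω).mpr hred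
  have hl' : ℓ (π ω.reverse * t) < ℓ (π ω.reverse) := by
    rw [cs.wordProd_reverse]
    have h1 : (π ω)⁻¹ * t = (t * π ω)⁻¹ := by
      rw [mul_inv_rev, hr.inv]
    rw [h1, cs.length_inv, cs.length_inv]
    exact hl
  have hmem := mem_ris_of_isRightInversion cs hr hred' hl'
  rw [cs.rightInvSeq_reverse] at hmem
  exact List.mem_reverse.mp hmem

end HKCoxAux

/-- Combinatorial claim used in the proof of Lemma 3.5 of Heckenberger–Kolb, in the
case `ℓ(w_S) = 1`: if `i ∈ S`, `w^S ∈ W^S`, `w' ∈ W^S` and `s_i w^S → w'`, then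
`w' = w^S`. -/
theorem arrow_target_eq_of_simple_mul_min_coset_rep
    {B W : Type*} [Group W] {M : CoxeterMatrix B} (cs : CoxeterSystem M W)
    (S : Set B) (i : B) (hi : i ∈ S)
    (wUpS : W)
    (hwUpS : ∀ v ∈ Subgroup.closure (cs.simple '' S),
      cs.length (v * wUpS) ≥ cs.length wUpS)
    (w' : W)
    (hw' : ∀ v ∈ Subgroup.closure (cs.simple '' S),
      cs.length (v * w') ≥ cs.length w')
    (t : W) (ht : cs.IsReflection t)
    (heq : cs.simple i * wUpS = t * w')
    (hlen : cs.length (cs.simple i * wUpS) = cs.length w' + 1) :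
    w' = wUpS := by
  classical
  have hsiS : cs.simple i ∈ Subgroup.closure (cs.simple '' S) :=
    Subgroup.subset_closure ⟨i, hi, rfl⟩
  have h1 : cs.length (cs.simple i * wUpS) = cs.length wUpS + 1 := by
    rcases cs.length_simple_mul wUpS i with h | h
    · exact h
    · have := hwUpS (cs.simple i) hsiS
      omega
  have hw'len : cs.length w' = cs.length wUpS := by omega
  obtain ⟨ω, hωlen, hωprod⟩ := cs.exists_reduced_word wUpS
  have hredω : cs.IsReduced ω := by
    exact hωlen
  have hπ2 : cs.wordProd (i :: ω) = cs.simple i * wUpS := by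
    rw [cs.wordProd_cons, ← hωprod]
  have hred2 : cs.IsReduced (i :: ω) := by
    show cs.length (cs.wordProd (i :: ω)) = (i :: ω).length
    rw [hπ2, h1]
    simp [hωprod, show cs.length (cs.wordProd ω) = ω.length from hredω]
  have htw : t * cs.wordProd (i :: ω) = w' := by
    rw [hπ2, heq, ← mul_assoc, ht.mul_self, one_mul]
  have hlt : cs.length (t * cs.wordProd (i :: ω)) < cs.length (cs.wordProd (i :: ω)) := by
    rw [htw, hπ2, hlen]
    omega
  have hmem := HKCoxAux.mem_lis_of_isLeftInversion cs ht hred2 hlt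
  have hliscons : cs.leftInvSeq (i :: ω)
      = cs.simple i :: List.map (MulAut.conj (cs.simple i)) (cs.leftInvSeq ω) := rfl
  rw [hliscons] at hmem
  rcases List.mem_cons.mp hmem with h | h
  · rw [h] at heq
    exact (mul_left_cancel heq).symm
  · obtain ⟨u, humem, hconj⟩ := List.mem_map.mp h
    have hu := cs.isLeftInversion_of_mem_leftInvSeq hredω humem
    have hu2 : cs.length (u * wUpS) < cs.length wUpS := by
      have := hu.2
      rwa [← hωprod] at this
    have hc : cs.simple i * u * (cs.simple i)⁻¹ = t := by
      rw [← hconj, MulAut.conj_apply]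
    have hkey : cs.simple i * w' = u * wUpS := by
      have hw'eq : w' = t * (cs.simple i * wUpS) := by
        rw [heq, ← mul_assoc, ht.mul_self, one_mul]
      rw [hw'eq, ← hc]
      simp [cs.inv_simple, mul_assoc, cs.simple_mul_simple_cancel_left]
    have hge := hw' (cs.simple i) hsiS
    rw [hkey] at hge
    omega
end
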